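/- Let μ₁, μ₂, α be nonnegative integers with μ₁ ≥ μ₂ ≥ α + 2, and set r = μ₁ − μ₂. Then ∑_{i=0}^{r} ∫_0^∞ (cosh t)^{2i − 2μ₁ − 2α − 4} sinh²(t) sinh(2t) dt = (r+1) / ((μ₂+α)(μ₁+α+1)). -/

import Mathlib

open MeasureTheory

open Real Filter Topology

lemma coshTop : Tendsto Real.cosh atTop atTop := by
  apply tendsto_atTop_mono (f := fun x => Real.exp x / 2)
  · intro x
    rw [Real.cosh_eq]
    nlinarith [Real.exp_pos (-x)]
  · exact Real.tendsto_exp_atTop.atTop_div_const (by norm_num)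

lemma key (m : ℕ) (hm : 2 ≤ m) :
    ∫ t in Set.Ioi (0 : ℝ),
      Real.cosh t ^ (-(2 * (m : ℤ)) - 2) * Real.sinh t ^ 2 * Real.sinh (2 * t)
    = 1 / ((m : ℝ) - 1) - 1 / m := by
  have hm1 : ((1 : ℝ) - m) ≠ 0 := by
    have : (2 : ℝ) ≤ m := by exact_mod_cast hm
    linarith
  have hm0 : (m : ℝ) ≠ 0 := by positivity
  have hm2 : ((-1 : ℝ) + m) ≠ 0 := by
    have : (2 : ℝ) ≤ m := by exact_mod_cast hm
    linarith
  set F : ℝ → ℝ := fun t =>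
    Real.cosh t ^ (2 - 2 * (m : ℤ)) / (1 - (m : ℝ)) + Real.cosh t ^ (-(2 * (m : ℤ))) / m
    with hF
  have hc : ∀ t : ℝ, Real.cosh t ≠ 0 := fun t => (Real.cosh_pos t).ne'
  have hderiv : ∀ x ∈ Set.Ioi (0 : ℝ), HasDerivAt F
      (Real.cosh x ^ (-(2 * (m : ℤ)) - 2) * Real.sinh x ^ 2 * Real.sinh (2 * x)) x := by
    intro x _
    have d1 := ((hasDerivAt_zpow (2 - 2 * (m : ℤ)) (Real.cosh x) (Or.inl (hc x))).comp x
      (Real.hasDerivAt_cosh x)).div_const ((1 : ℝ) - m)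
    have d2 := ((hasDerivAt_zpow (-(2 * (m : ℤ))) (Real.cosh x) (Or.inl (hc x))).comp x
      (Real.hasDerivAt_cosh x)).div_const (m : ℝ)
    have h1 := d1.add d2
    refine h1.congr_deriv (Eq.symm ?_)
    have e1 : (2 - 2 * (m : ℤ)) - 1 = (-(2 * (m : ℤ)) - 2) + 3 := by ring
    have e2 : (-(2 * (m : ℤ))) - 1 = (-(2 * (m : ℤ)) - 2) + 1 := by ring
    rw [e1, e2, zpow_add₀ (hc x), zpow_add₀ (hc x), Real.sinh_two_mul, Real.sinh_sq]
    rw [show Real.cosh x ^ (3 : ℤ) = Real.cosh x ^ (3 : ℕ) from zpow_natCast _ 3,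
      zpow_one]
    push_cast
    generalize Real.cosh x ^ (-(2 * (m : ℤ)) - 2) = c
    field_simp
    ring
  have hFc : Continuous F :=
    ((Real.continuous_cosh.zpow₀ _ (fun t => Or.inl (hc t))).div_const _).add
      ((Real.continuous_cosh.zpow₀ _ (fun t => Or.inl (hc t))).div_const _)
  have hnonneg : ∀ x ∈ Set.Ioi (0 : ℝ),
      0 ≤ Real.cosh x ^ (-(2 * (m : ℤ)) - 2) * Real.sinh x ^ 2 * Real.sinh (2 * x) := by
    intro x hx
    have hx0 : (0 : ℝ) < x := hx
    have h2x : 0 ≤ Real.sinh (2 * x) := Real.sinh_nonneg_iff.2 (by linarith)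
    have := zpow_pos (Real.cosh_pos x) (-(2 * (m : ℤ)) - 2)
    positivity
  have htend : Tendsto F atTop (𝓝 0) := by
    have t1 : Tendsto (fun t : ℝ => Real.cosh t ^ (2 - 2 * (m : ℤ))) atTop (𝓝 0) :=
      (tendsto_zpow_atTop_zero (by omega)).comp coshTop
    have t2 : Tendsto (fun t : ℝ => Real.cosh t ^ (-(2 * (m : ℤ)))) atTop (𝓝 0) :=
      (tendsto_zpow_atTop_zero (by omega)).comp coshTop
    have h := (t1.div_const ((1 : ℝ) - m)).add (t2.div_const (m : ℝ))
    rw [show (0 : ℝ) = 0 / (1 - (m : ℝ)) + 0 / (m : ℝ) by simp]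
    exact h
  rw [integral_Ioi_of_hasDerivAt_of_nonneg hFc.continuousWithinAt hderiv hnonneg htend]
  simp only [hF, Real.cosh_zero, one_zpow]
  rw [show (1 : ℝ) / (1 - (m : ℝ)) = -(1 / ((m : ℝ) - 1)) by
    rw [← neg_sub (m : ℝ) 1, div_neg]]
  ring

/-- The analytic core of the zeta-integral evaluation in case (C1, II):
for `μ₁ ≥ μ₂ ≥ α + 2` and `r = μ₁ − μ₂`,
`∑_{i=0}^{r} ∫₀^∞ (cosh t)^{2i−2μ₁−2α−4} sinh²t sinh(2t) dt
  = (r+1)/((μ₂+α)(μ₁+α+1))`. -/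
theorem stmt_15 (μ₁ μ₂ α r : ℕ) (h1 : μ₂ ≤ μ₁) (h2 : α + 2 ≤ μ₂)
    (hr : r = μ₁ - μ₂) :
    ∑ i ∈ Finset.range (r + 1),
        ∫ t in Set.Ioi (0 : ℝ),
          Real.cosh t ^ (2 * (i : ℤ) - 2 * (μ₁ : ℤ) - 2 * (α : ℤ) - 4) *
            Real.sinh t ^ 2 * Real.sinh (2 * t)
      = ((r : ℝ) + 1) / (((μ₂ : ℝ) + α) * ((μ₁ : ℝ) + α + 1)) := by
  set g : ℕ → ℝ := fun i => 1 / ((μ₁ : ℝ) + α + 1 - i) with hg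
  have hstep : ∀ i ∈ Finset.range (r + 1),
      (∫ t in Set.Ioi (0 : ℝ),
          Real.cosh t ^ (2 * (i : ℤ) - 2 * (μ₁ : ℤ) - 2 * (α : ℤ) - 4) *
            Real.sinh t ^ 2 * Real.sinh (2 * t)) = g (i + 1) - g i := by
    intro i hi
    have hi' : i ≤ r := Nat.lt_succ_iff.mp (Finset.mem_range.mp hi)
    set m : ℕ := μ₁ + α + 1 - i with hm'
    have hm : 2 ≤ m := by omega
    have hexp : 2 * (i : ℤ) - 2 * (μ₁ : ℤ) - 2 * (α : ℤ) - 4 = -(2 * (m : ℤ)) - 2 := by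
      omega
    rw [hexp, key m hm]
    have hmr : (m : ℝ) = (μ₁ : ℝ) + α + 1 - i := by
      have : (m : ℤ) = (μ₁ : ℤ) + α + 1 - i := by omega
      exact_mod_cast congrArg (fun z : ℤ => (z : ℝ)) this
    rw [hg]
    push_cast
    rw [hmr]
    ring_nf
  rw [Finset.sum_congr rfl hstep, Finset.sum_range_sub g]
  have hμ₂ : ((μ₂ : ℝ) + α) ≠ 0 := by
    have : (2 : ℝ) ≤ μ₂ := by exact_mod_cast le_trans (by omega) h2
    positivity
  have hμ₁ : ((μ₁ : ℝ) + α + 1) ≠ 0 := by positivity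
  have hrr : (r : ℝ) = (μ₁ : ℝ) - μ₂ := by
    have : (r : ℤ) = (μ₁ : ℤ) - μ₂ := by omega
    exact_mod_cast congrArg (fun z : ℤ => (z : ℝ)) this
  rw [hg]
  push_cast
  rw [hrr]
  have hμ₂' : ((α : ℝ) + μ₂) ≠ 0 := by rw [add_comm]; exact hμ₂
  field_simp [hμ₂']
  ring
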